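/- Let (E,ℒ,𝒜) be a weakly left-resolving, normal labelled space. Then the groupoid Γ, equipped with the topology whose basis is the collection of sets Z_{s,e:e₁,…,eₙ} (s ∈ S, e,e₁,…,eₙ ∈ E(S)), is a Hausdorff topological space. -/

import Mathlib

open Classical

universe u v w

/-! ## Words over an alphabet -/

/-- Finite-or-infinite words over the alphabet `A`: `Sum.inl l` is the finite word `l`
(with `[]` playing the role of the empty word `ω`), and `Sum.inr f` is the infinite word `f`. -/
abbrev Word (A : Type w) := List A ⊕ (ℕ → A)

/-- The length `|α| ∈ ℕ∞` of a word. -/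
def wlength {A : Type w} : Word A → ℕ∞ :=
  Sum.elim (fun l => (l.length : ℕ∞)) fun _ => ⊤

/-- The finite prefix `α_{1,n}` of a word `α`. -/
def wprefix {A : Type w} : Word A → ℕ → List A :=
  Sum.elim (fun l n => l.take n) fun f n => List.ofFn fun i : Fin n => f i

/-- Concatenation `αβ` of a finite word `α` with a word `β`. -/
def wappend {A : Type w} (α : List A) : Word A → Word A :=
  Sum.elim (fun l => Sum.inl (α ++ l)) fun f =>
    Sum.inr fun n => if h : n < α.length then α.get ⟨n, h⟩ else f (n - α.length)

/-- `β` is a beginning (finite prefix) of the word `α`. -/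
def WPrefix {A : Type w} (β : List A) : Word A → Prop :=
  Sum.elim (fun l => β <+: l) fun f => β = List.ofFn fun i : Fin β.length => f i

/-! ## Triples -/

/-- Formal triples `(α, X, β)` together with a zero element; the inverse semigroup `S`
of a labelled space consists of such elements. -/
inductive Tr (V : Type u) (A : Type w) where
  | zero : Tr V A
  | mk : List A → Set V → List A → Tr V A

/-- The involution `(α,A,β)* = (β,A,α)` (fixing `0`). -/
def Tr.tstar {V : Type u} {A : Type w} : Tr V A → Tr V A
  | .zero => .zero
  | .mk α X β => .mk β X α

/-! ## Labelled spaces -/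

/-- The data of a labelled space `(E, ℒ, 𝒜)`: a directed graph on nonempty vertex/edge
sets, a surjective labelling map onto the alphabet `A`, and a family `𝒜` of subsets
of the vertex set. -/
structure LblSp (V : Type u) (E : Type v) (A : Type w) where
  src : E → V
  rng : E → V
  lab : E → A
  lab_surj : Function.Surjective lab
  nonempty_V : Nonempty V
  nonempty_E : Nonempty E
  𝒜 : Set (Set V)

namespace LblSp

variable {V : Type u} {Ed : Type v} {A : Type w} (Λ : LblSp V Ed A)

/-- `α ≠ ω` is the label of some finite path of the graph. -/
def IsPathLabel (α : List A) : Prop :=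
  ∃ l : List Ed, l ≠ [] ∧ List.Chain' (fun e f => Λ.rng e = Λ.src f) l ∧ l.map Λ.lab = α

/-- `ℒ^*`: the finite labelled paths, together with the empty word. -/
def LStar : Set (List A) := {α | α = [] ∨ Λ.IsPathLabel α}

/-- `ℒ^∞`: the infinite labelled paths. -/
def LInfty : Set (ℕ → A) :=
  {f | ∃ e : ℕ → Ed, (∀ n, Λ.rng (e n) = Λ.src (e (n + 1))) ∧ ∀ n, Λ.lab (e n) = f n}

/-- `ℒ^{≤∞} = ℒ^* ∪ ℒ^∞`, as a predicate on `Word A`. -/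
def IsWordW : Word A → Prop := Sum.elim (· ∈ Λ.LStar) (· ∈ Λ.LInfty)

/-- The relative range `r(X, α)` (with `r(X, ω) = X`). -/
noncomputable def relRange (X : Set V) (α : List A) : Set V :=
  if α = [] then X
  else {v | ∃ (l : List Ed) (h : l ≠ []), List.Chain' (fun e f => Λ.rng e = Λ.src f) l ∧
        l.map Λ.lab = α ∧ Λ.src (l.head h) ∈ X ∧ Λ.rng (l.getLast h) = v}

/-- The range `r(α) = r(E⁰, α)`. -/
noncomputable def rangeL (α : List A) : Set V := Λ.relRange Set.univ α

/-- `𝒜^α = {X ∈ 𝒜 : X ⊆ r(α)}`. -/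
noncomputable def Aset (α : List A) : Set (Set V) := {X | X ∈ Λ.𝒜 ∧ X ⊆ Λ.rangeL α}

/-- `(E, ℒ, 𝒜)` is a labelled space: `𝒜` is closed under finite intersections and
unions, contains all ranges `r(α)` for `α ∈ ℒ^{≥1}`, and is closed under relative ranges. -/
structure IsLS : Prop where
  inter_mem : ∀ X ∈ Λ.𝒜, ∀ Y ∈ Λ.𝒜, X ∩ Y ∈ Λ.𝒜
  union_mem : ∀ X ∈ Λ.𝒜, ∀ Y ∈ Λ.𝒜, X ∪ Y ∈ Λ.𝒜
  range_mem : ∀ α ∈ Λ.LStar, α ≠ [] → Λ.rangeL α ∈ Λ.𝒜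
  relRange_mem : ∀ X ∈ Λ.𝒜, ∀ α ∈ Λ.LStar, Λ.relRange X α ∈ Λ.𝒜

/-- A weakly left-resolving labelled space. -/
structure IsWLR : Prop where
  toIsLS : Λ.IsLS
  wlr : ∀ X ∈ Λ.𝒜, ∀ Y ∈ Λ.𝒜, ∀ α ∈ Λ.LStar, α ≠ [] →
    Λ.relRange (X ∩ Y) α = Λ.relRange X α ∩ Λ.relRange Y α

/-- A weakly left-resolving normal labelled space. -/
structure IsNormal : Prop where
  toIsWLR : Λ.IsWLR
  sdiff_mem : ∀ X ∈ Λ.𝒜, ∀ Y ∈ Λ.𝒜, X \ Y ∈ Λ.𝒜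

/-! ## The inverse semigroup `S` -/

/-- The underlying set of the inverse semigroup
`S = {(α,A,β) : α, β ∈ ℒ^*, A ∈ 𝒜^α ∩ 𝒜^β, A ≠ ∅} ∪ {0}`. -/
def SSet : Set (Tr V A) :=
  {t | t = Tr.zero ∨ ∃ α X β, t = Tr.mk α X β ∧ α ∈ Λ.LStar ∧ β ∈ Λ.LStar ∧
    X ∈ Λ.Aset α ∧ X ∈ Λ.Aset β ∧ X.Nonempty}

/-- The semilattice of idempotents `E(S) = {(α,A,α)} ∪ {0}`. -/
def ESet : Set (Tr V A) :=
  {t | t = Tr.zero ∨ ∃ α X, t = Tr.mk α X α ∧ α ∈ Λ.LStar ∧ X ∈ Λ.Aset α ∧ X.Nonempty}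

/-- The product of `S`. -/
noncomputable def tmul : Tr V A → Tr V A → Tr V A
  | Tr.zero, _ => Tr.zero
  | Tr.mk _ _ _, Tr.zero => Tr.zero
  | Tr.mk α X β, Tr.mk γ Y δ =>
    if β <+: γ ∧ (Λ.relRange X (γ.drop β.length) ∩ Y).Nonempty then
      Tr.mk (α ++ γ.drop β.length) (Λ.relRange X (γ.drop β.length) ∩ Y) δ
    else if γ <+: β ∧ (X ∩ Λ.relRange Y (β.drop γ.length)).Nonempty then
      Tr.mk α (X ∩ Λ.relRange Y (β.drop γ.length)) (δ ++ β.drop γ.length)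
    else Tr.zero

/-! ## Filters in `E(S)`, characters, and the tight spectrum -/

/-- A filter in `E(S)`: a nonempty subset of `E(S) ∖ {0}` closed under products and
upward closed in the natural order (`p ≤ q ↔ pq = p`). -/
def IsFilterES (ξ : Set (Tr V A)) : Prop :=
  ξ.Nonempty ∧ (∀ t ∈ ξ, t ∈ Λ.ESet ∧ t ≠ Tr.zero) ∧
  (∀ p ∈ ξ, ∀ q ∈ ξ, Λ.tmul p q ∈ ξ) ∧
  (∀ p ∈ ξ, ∀ q ∈ Λ.ESet, Λ.tmul p q = p → q ∈ ξ)

/-- An ultrafilter in `E(S)`. -/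
def IsUltraES (ξ : Set (Tr V A)) : Prop :=
  Λ.IsFilterES ξ ∧ ∀ ζ, Λ.IsFilterES ζ → ξ ⊆ ζ → ξ = ζ

/-- The character (indicator function) of a filter. -/
noncomputable def charOf (_Λ : LblSp V Ed A) (ξ : Set (Tr V A)) : Tr V A → Bool :=
  fun t => if t ∈ ξ then true else false

/-- A character of `E(S)`: a nonzero, zero- and meet-preserving `{0,1}`-valued map on
`E(S)` (encoded as a map on triples vanishing outside `E(S)`). -/
def IsChar (φ : Tr V A → Bool) : Prop :=
  (∃ e, φ e = true) ∧ (∀ e, e ∉ Λ.ESet → φ e = false) ∧ φ Tr.zero = false ∧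
  ∀ e ∈ Λ.ESet, ∀ f ∈ Λ.ESet, φ (Λ.tmul e f) = (φ e && φ f)

/-- The tight spectrum `Ê_tight`: the closure, within the space of characters with the
topology of pointwise convergence, of the set of characters of ultrafilters. -/
def tightSpectrum : Set (Tr V A → Bool) :=
  {φ | Λ.IsChar φ} ∩ closure {φ | ∃ ξ, Λ.IsUltraES ξ ∧ φ = Λ.charOf ξ}

/-- A tight filter: a filter whose character lies in the tight spectrum. -/
def IsTightFilter (ξ : Set (Tr V A)) : Prop :=
  Λ.IsFilterES ξ ∧ Λ.charOf ξ ∈ Λ.tightSpectrum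

/-- `ξ_{|β|} = {B : (β, B, β) ∈ ξ}`, the filter of `ξ` at level `β`. -/
def filterAt (_Λ : LblSp V Ed A) (ξ : Set (Tr V A)) (β : List A) : Set (Set V) :=
  {B | Tr.mk β B β ∈ ξ}

/-- `α` is the word associated with the filter `ξ` (i.e. `ξ = ξ^α`): the nonempty finite
beginnings of `α` are exactly the words appearing in elements of `ξ`. -/
def HasWord (_Λ : LblSp V Ed A) (ξ : Set (Tr V A)) (α : Word A) : Prop :=
  ∀ β : List A, β ≠ [] → ((∃ B, Tr.mk β B β ∈ ξ) ↔ WPrefix β α)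

/-! ## Filters and ultrafilters in `𝒜^β` -/

/-- A filter in the Boolean algebra `𝒜^β`. -/
def IsFilterAset (β : List A) (F : Set (Set V)) : Prop :=
  F.Nonempty ∧ F ⊆ Λ.Aset β ∧ (∀ X ∈ F, X.Nonempty) ∧
  (∀ X ∈ F, ∀ Y ∈ F, X ∩ Y ∈ F) ∧ (∀ X ∈ F, ∀ Y ∈ Λ.Aset β, X ⊆ Y → Y ∈ F)

/-- An ultrafilter in `𝒜^β` (an element of `X_β`). -/
def IsUltraAset (β : List A) (F : Set (Set V)) : Prop :=
  Λ.IsFilterAset β F ∧ ∀ G, Λ.IsFilterAset β G → F ⊆ G → F = G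

/-- The gluing map `g_{(α)β}(F) = {C ∩ r(αβ) : C ∈ F}` on ultrafilters. -/
noncomputable def gmap (α β : List A) (F : Set (Set V)) : Set (Set V) :=
  {X | ∃ C ∈ F, X = C ∩ Λ.rangeL (α ++ β)}

/-- The cutting map `h_{[α]β}(F) = {C ∈ 𝒜^β : D ⊆ C for some D ∈ F}` on ultrafilters. -/
noncomputable def hmap (α β : List A) (F : Set (Set V)) : Set (Set V) :=
  {C | C ∈ Λ.Aset β ∧ ∃ D ∈ F, D ⊆ C}

/-! ## Cutting and gluing of (tight) filters in `E(S)` -/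

/-- The cutting map `H_{[α]β} : T^{αβ} → T^{(α)β}` (word-free formulation): the filter
whose family is `η_n = h_{[α]β_{1,n}}(ξ_{n+|α|})`; `H_{[ω]β}` is the identity. -/
noncomputable def Hcut (α : List A) (ξ : Set (Tr V A)) : Set (Tr V A) :=
  if α = [] then ξ
  else {t | ∃ δ B, t = Tr.mk δ B δ ∧ B ∈ Λ.Aset δ ∧
        ∃ D, Tr.mk (α ++ δ) D (α ++ δ) ∈ ξ ∧ D ⊆ B}

/-- The gluing map `G_{(α)β} : T^{(α)β} → T^{αβ}` (word-free formulation): the filter with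
family `η_{|α|+n} = g_{(α)β_{1,n}}(ξ_n)` for `n ≥ 1` and `η_i = f_{α_{1,i}[…]}(…)` for
`i ≤ |α|`, with the two cases according to whether the word of `ξ` is empty (`β = ω`)
or not; `G_{(ω)β}` is the identity. -/
noncomputable def Gglue (α : List A) (ξ : Set (Tr V A)) : Set (Tr V A) :=
  if α = [] then ξ
  else if ∃ (δ : List A) (B : Set V), δ ≠ [] ∧ Tr.mk δ B δ ∈ ξ then
    {t | ∃ δ B, t = Tr.mk δ B δ ∧
      ((α <+: δ ∧ α ≠ δ ∧ ∃ C, Tr.mk (δ.drop α.length) C (δ.drop α.length) ∈ ξ ∧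
          B = C ∩ Λ.rangeL δ) ∨
       (δ <+: α ∧ B ∈ Λ.Aset δ ∧ ∃ (b : A) (C : Set V), Tr.mk [b] C [b] ∈ ξ ∧
          Λ.relRange B (α.drop δ.length ++ [b]) = C ∩ Λ.rangeL (α ++ [b])))}
  else
    {t | ∃ δ B, t = Tr.mk δ B δ ∧ δ <+: α ∧ B ∈ Λ.Aset δ ∧
      ∃ C, Tr.mk [] C [] ∈ ξ ∧ Λ.relRange B (α.drop δ.length) = C ∩ Λ.rangeL α}

/-- `T^β`: the set of tight filters with associated word `β`. -/
def TWord (β : Word A) : Set (Set (Tr V A)) :=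
  {ξ | Λ.IsTightFilter ξ ∧ Λ.HasWord ξ β}

/-- `T^{(α)β} = {ξ ∈ T^β : r(α) ∈ ξ_0}` (equal to `T^β` when `α = ω`), the domain of the
gluing map `G_{(α)β}`. -/
def TGlueDom (α : List A) (β : Word A) : Set (Set (Tr V A)) :=
  {ξ | Λ.IsTightFilter ξ ∧ Λ.HasWord ξ β ∧ (α ≠ [] → Tr.mk [] (Λ.rangeL α) [] ∈ ξ)}

/-! ## The groupoid `Γ` -/

/-- The defining relation of
`Γ = {(ξ^{aγ}, |a|-|b|, η^{bγ}) ∈ T × ℤ × T : H_{[a]γ}(ξ^{aγ}) = H_{[b]γ}(η^{bγ})}`. -/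
def InGamma (η : Set (Tr V A)) (m : ℤ) (ξ : Set (Tr V A)) : Prop :=
  ∃ (a b : List A) (γ : Word A), a ∈ Λ.LStar ∧ b ∈ Λ.LStar ∧ Λ.IsWordW γ ∧
    η ∈ Λ.TWord (wappend a γ) ∧ ξ ∈ Λ.TWord (wappend b γ) ∧
    m = (a.length : ℤ) - (b.length : ℤ) ∧ Λ.Hcut a η = Λ.Hcut b ξ

/-- `Γ` as a set of raw triples. -/
def GammaRaw : Set (Set (Tr V A) × ℤ × Set (Tr V A)) :=
  {p | Λ.InGamma p.1 p.2.1 p.2.2}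

/-- The basic set `Z_{s,e:e₁,…,eₙ}` of `Γ` (raw version), for `s = (μ, X, ν)`:
triples `(η^{μγ}, |μ|-|ν|, ξ^{νγ}) ∈ Γ` with `e ∈ ξ`, `eᵢ ∉ ξ` and
`H_{[μ]γ}(η) = H_{[ν]γ}(ξ)`. -/
noncomputable def ZrawGen (μ ν : List A) (e : Tr V A) (es : List (Tr V A)) :
    Set (Set (Tr V A) × ℤ × Set (Tr V A)) :=
  {p | Λ.InGamma p.1 p.2.1 p.2.2 ∧ p.2.1 = (μ.length : ℤ) - (ν.length : ℤ) ∧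
       e ∈ p.2.2 ∧ (∀ f ∈ es, f ∉ p.2.2) ∧
       ∃ γ : Word A, Λ.HasWord p.1 (wappend μ γ) ∧ Λ.HasWord p.2.2 (wappend ν γ) ∧
         Λ.Hcut μ p.1 = Λ.Hcut ν p.2.2}

/-- `Z_s = Z_{s, s*s}` for `s = (μ, X, ν)` (raw version). -/
noncomputable def Zraw (μ : List A) (X : Set V) (ν : List A) :
    Set (Set (Tr V A) × ℤ × Set (Tr V A)) :=
  Λ.ZrawGen μ ν (Tr.mk ν X ν) []

/-- The basic set `V_{e:e₁,…,eₙ} = U_{e:e₁,…,eₙ} ∩ T` of the tight filter space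
(raw version). -/
def VrawGen (e : Tr V A) (es : List (Tr V A)) : Set (Set (Tr V A)) :=
  {ξ | Λ.IsTightFilter ξ ∧ e ∈ ξ ∧ ∀ f ∈ es, f ∉ ξ}

/-- The shift map `σ : T^{(1)} → T`, `σ(ξ^{aγ}) = H_{[a]γ}(ξ^{aγ})` (extended by the
identity off its domain). -/
noncomputable def sigmaMap (ξ : Set (Tr V A)) : Set (Tr V A) :=
  if h : ∃ a : A, ∃ B : Set V, Tr.mk [a] B [a] ∈ ξ then Λ.Hcut [h.choose] ξ else ξ

/-- The Renault–Deaconu basic set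
`𝒱(X, Y, m, n) = {(η, m-n, ξ) ∈ Γ : (η, ξ) ∈ X × Y, σ^m(η) = σ^n(ξ)}` (raw version). -/
noncomputable def VrdRaw (Xs Ys : Set (Set (Tr V A))) (m n : ℕ) :
    Set (Set (Tr V A) × ℤ × Set (Tr V A)) :=
  {p | Λ.InGamma p.1 p.2.1 p.2.2 ∧ p.2.1 = (m : ℤ) - (n : ℤ) ∧
       p.1 ∈ Xs ∧ p.2.2 ∈ Ys ∧ (Λ.sigmaMap)^[m] p.1 = (Λ.sigmaMap)^[n] p.2.2}

/-! ## The groupoid of germs `𝒢_tight` -/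

/-- The action `θ_s(φ)(e) = φ(s* e s)` of `S` on characters. -/
noncomputable def theta (s : Tr V A) (φ : Tr V A → Bool) : Tr V A → Bool :=
  fun e => if e ∈ Λ.ESet then φ (Λ.tmul (Λ.tmul (Tr.tstar s) e) s) else false

/-- `Ω = {(s, φ) ∈ S × Ê_tight : φ ∈ D_{s*s}}`. -/
noncomputable def Omega : Set (Tr V A × (Tr V A → Bool)) :=
  {p | p.1 ∈ Λ.SSet ∧ p.2 ∈ Λ.tightSpectrum ∧ p.2 (Λ.tmul (Tr.tstar p.1) p.1) = true}

/-- The germ equivalence relation on `Ω`: `(s,φ) ∼ (t,ψ)` iff `φ = ψ` and there is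
`e ∈ E(S)` with `φ(e) = 1` and `se = te`. -/
noncomputable def germEquiv (p q : Tr V A × (Tr V A → Bool)) : Prop :=
  p.2 = q.2 ∧ ∃ e ∈ Λ.ESet, p.2 e = true ∧ Λ.tmul p.1 e = Λ.tmul q.1 e

/-- The map `Φ` at the level of `Ω`: for `t = (β, X, γ)` and `φ` with filter `ξ^α`
(where `α = γα'`), `Φ[t,φ] = ((G_{(β)α'} ∘ H_{[γ]α'})(ξ^α), |β|-|γ|, ξ^α)`. -/
noncomputable def PhiRaw : Tr V A → (Tr V A → Bool) → Set (Tr V A) × ℤ × Set (Tr V A)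
  | Tr.zero, _ => (∅, 0, ∅)
  | Tr.mk β _ γ, φ =>
      (Λ.Gglue β (Λ.Hcut γ {e | φ e = true}), (β.length : ℤ) - (γ.length : ℤ),
        {e | φ e = true})

/-! ## Miscellaneous notions -/

/-- `ℒ(XE¹) = {ℒ(e) : e ∈ E¹, s(e) ∈ X}`. -/
def labE (X : Set V) : Set A := {a | ∃ e, Λ.lab e = a ∧ Λ.src e ∈ X}

/-- The set `E⁰_sink` of sinks. -/
def sinks : Set V := {v | ∀ e, Λ.src e ≠ v}

/-- The filter in `E(S)` associated with a pair (word, complete family). -/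
def pairFilter (_Λ : LblSp V Ed A) (α : Word A) (F : ℕ → Set (Set V)) : Set (Tr V A) :=
  {t | ∃ (n : ℕ) (B : Set V), (n : ℕ∞) ≤ wlength α ∧ B ∈ F n ∧
    t = Tr.mk (wprefix α n) B (wprefix α n)}

/-- A complete family for the word `α`: `F n` is a filter in `𝒜^{α_{1,n}}` for
`1 ≤ n ≤ |α|` (`F 0` is a filter in `𝒜` or empty, and a filter if `α = ω`), and
`F n = {X ∈ 𝒜^{α_{1,n}} : r(X, α_{n+1}) ∈ F (n+1)}` for all `n < |α|`. -/
noncomputable def IsCompleteFamily (α : Word A) (F : ℕ → Set (Set V)) : Prop :=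
  Λ.IsWordW α ∧
  (∀ n : ℕ, 1 ≤ n → (n : ℕ∞) ≤ wlength α → Λ.IsFilterAset (wprefix α n) (F n)) ∧
  (F 0 = ∅ ∨ Λ.IsFilterAset [] (F 0)) ∧
  (wlength α = 0 → Λ.IsFilterAset [] (F 0)) ∧
  (∀ n : ℕ, ((n + 1 : ℕ) : ℕ∞) ≤ wlength α →
    F n = {X | X ∈ Λ.Aset (wprefix α n) ∧
      Λ.relRange X ((wprefix α (n + 1)).drop n) ∈ F (n + 1)})

/-! ## The tight filter space `T` and the groupoid `Γ` as types -/

/-- The space `T` of tight filters. -/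
structure TightT where
  carrier : Set (Tr V A)
  tight : Λ.IsTightFilter carrier

/-- The topology of `T`, induced from pointwise convergence of characters. -/
noncomputable instance : TopologicalSpace Λ.TightT :=
  TopologicalSpace.induced (fun ξ => Λ.charOf ξ.carrier) inferInstance

/-- The groupoid `Γ ⊆ T × ℤ × T` as a type. -/
structure GammaT where
  fst : Λ.TightT
  mid : ℤ
  lst : Λ.TightT
  mem : Λ.InGamma fst.carrier mid lst.carrier

/-- The raw triple underlying an element of `Γ`. -/
def rawOf (p : Λ.GammaT) : Set (Tr V A) × ℤ × Set (Tr V A) :=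
  (p.fst.carrier, p.mid, p.lst.carrier)

/-- The collection of all sets `Z_{s,e:e₁,…,eₙ}` (for `s ∈ S`, `e, eᵢ ∈ E(S)`),
as subsets of `Γ`. -/
noncomputable def ZBasisT : Set (Set Λ.GammaT) :=
  {Z | ∃ (μ : List A) (X : Set V) (ν : List A) (e : Tr V A) (es : List (Tr V A)),
    Tr.mk μ X ν ∈ Λ.SSet ∧ e ∈ Λ.ESet ∧ (∀ f ∈ es, f ∈ Λ.ESet) ∧
    Z = {p : Λ.GammaT | Λ.rawOf p ∈ Λ.ZrawGen μ ν e es}}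

/-- The topology on `Γ` induced by the isomorphism `Φ` from the germ topology of
`𝒢_tight`, generated by the images of the basic sets `Θ(s, 𝒰)` with `𝒰 ⊆ D_{s*s}`
open in the tight spectrum. -/
noncomputable def PhiTopology : TopologicalSpace Λ.GammaT :=
  TopologicalSpace.generateFrom
    {Z | ∃ (s : Tr V A) (U : Set (Tr V A → Bool)), s ∈ Λ.SSet ∧
      (∃ W, IsOpen W ∧ U = W ∩ Λ.tightSpectrum) ∧
      (∀ φ ∈ U, φ (Λ.tmul (Tr.tstar s) s) = true) ∧
      Z = {p : Λ.GammaT | ∃ φ ∈ U, (s, φ) ∈ Λ.Omega ∧ Λ.PhiRaw s φ = Λ.rawOf p}}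

end LblSp

namespace LblSp

variable {V : Type u} {Ed : Type v} {A : Type w} {Λ : LblSp V Ed A}

theorem wprefix_wappend (β : List A) (γ : Word A) : WPrefix β (wappend β γ) := by
  cases γ with
  | inl l => exact List.prefix_append β l
  | inr f =>
    show β = List.ofFn _
    apply List.ext_getElem (by simp)
    intro i h1 h2
    simp only [List.getElem_ofFn, wappend]
    rw [dif_pos h1]
    simp

theorem wappend_assoc (x y : List A) (γ : Word A) :
    wappend (x ++ y) γ = wappend x (wappend y γ) := by
  cases γ with
  | inl l => simp [wappend, List.append_assoc]
  | inr f =>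
    simp only [wappend, Sum.elim_inr]
    refine congrArg Sum.inr (funext fun n => ?_)
    rcases Nat.lt_or_ge n x.length with h | h
    · rw [dif_pos (by simp; omega), dif_pos h]
      simp [List.getElem_append, h]
    rcases Nat.lt_or_ge n (x.length + y.length) with h2 | h2
    · rw [dif_pos (by simp; omega), dif_neg (by omega), dif_pos (by omega)]
      have : (x ++ y).get ⟨n, by simp; omega⟩ = (x ++ y)[n]'(by simp; omega) := rfl
      rw [this, List.getElem_append_right h]
      rfl
    · rw [dif_neg (by simp; omega), dif_neg (by omega), dif_neg (by omega)]
      congr 1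
      simp
      omega

theorem wappend_left_cancel {x : List A} {γ γ' : Word A}
    (h : wappend x γ = wappend x γ') : γ = γ' := by
  cases γ with
  | inl l =>
    cases γ' with
    | inl l' =>
      simp only [wappend, Sum.elim_inl, Sum.inl.injEq] at h
      exact congrArg Sum.inl (List.append_cancel_left h)
    | inr f => simp [wappend] at h
  | inr f =>
    cases γ' with
    | inl l' => simp [wappend] at h
    | inr f' =>
      simp only [wappend, Sum.elim_inr, Sum.inr.injEq] at h
      have := congrFun h
      refine congrArg Sum.inr (funext fun n => ?_)
      have h2 := this (n + x.length)
      rw [dif_neg (by omega), dif_neg (by omega)] at h2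
      simpa using h2

theorem wappend_right_cancel {x y : List A} {γ : Word A} (hl : x.length = y.length)
    (h : wappend x γ = wappend y γ) : x = y := by
  cases γ with
  | inl l =>
    simp only [wappend, Sum.elim_inl, Sum.inl.injEq] at h
    exact List.append_cancel_right h
  | inr f =>
    simp only [wappend, Sum.elim_inr, Sum.inr.injEq] at h
    have := congrFun h
    apply List.ext_getElem hl
    intro i h1 h2
    have h3 := this i
    rw [dif_pos h1, dif_pos h2] at h3
    exact h3

theorem wprefix_prefix {x y : List A} {w : Word A} (hx : WPrefix x w) (hy : WPrefix y w)
    (hl : x.length ≤ y.length) : x <+: y := by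
  cases w with
  | inl l => exact List.prefix_of_prefix_length_le hx hy hl
  | inr f =>
    rw [List.prefix_iff_eq_take]
    rw [show x = _ from hx, show y = _ from hy]
    apply List.ext_getElem (by simp; omega)
    intro i h1 h2
    simp at h1 h2 ⊢

theorem word_eq_of_prefix_iff {w w' : Word A}
    (h : ∀ β : List A, β ≠ [] → (WPrefix β w ↔ WPrefix β w')) : w = w' := by
  have wp : ∀ n (f : ℕ → A), WPrefix (List.ofFn fun i : Fin n => f i) (Sum.inr f) := by
    intro n f
    show _ = _
    apply List.ext_getElem (by simp)
    intro i h1 h2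
    simp
  cases w with
  | inl l =>
    cases w' with
    | inl l' =>
      rcases eq_or_ne l [] with rfl | hl
      · rcases eq_or_ne l' [] with rfl | hl'
        · rfl
        · have := (h l' hl').mpr (List.prefix_refl l')
          exact absurd (List.eq_nil_of_prefix_nil this) hl'
      · have h1 : l <+: l' := (h l hl).mp (List.prefix_refl l)
        have hl' : l' ≠ [] := by rintro rfl; exact hl (List.eq_nil_of_prefix_nil h1)
        have h2 : l' <+: l := (h l' hl').mpr (List.prefix_refl l')
        exact congrArg Sum.inl (h1.eq_of_length (h1.length_le.antisymm h2.length_le))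
    | inr f =>
      exfalso
      have hne : (List.ofFn fun i : Fin (l.length + 1) => f i) ≠ [] := by simp
      have := (h _ hne).mpr (wp (l.length + 1) f)
      have hlen := this.length_le
      simp at hlen
  | inr f =>
    cases w' with
    | inl l' =>
      exfalso
      have hne : (List.ofFn fun i : Fin (l'.length + 1) => f i) ≠ [] := by simp
      have := (h _ hne).mp (wp (l'.length + 1) f)
      have hlen := this.length_le
      simp at hlen
    | inr f' =>
      refine congrArg Sum.inr (funext fun n => ?_)
      have h1 := (h _ (by simp : (List.ofFn fun i : Fin (n+1) => f i) ≠ [])).mp (wp (n+1) f)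
      have h2 : (List.ofFn fun i : Fin (n+1) => f i) = List.ofFn fun i : Fin (n+1) => f' i := by
        rw [show ((List.ofFn fun i : Fin (n+1) => f i) : List A) = _ from h1]
        apply List.ext_getElem (by simp)
        intro i hh1 hh2
        simp
      have h3 := List.getElem_of_eq h2 (i := n) (by simp)
      simp only [List.getElem_ofFn] at h3
      exact h3

theorem hasWord_mem {ξ : Set (Tr V A)} {w : Word A} (h : HasWord Λ ξ w) {β : List A}
    (hβ : WPrefix β w) (hne : β ≠ []) : ∃ B, Tr.mk β B β ∈ ξ :=
  (h β hne).mpr hβ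

theorem hasWord_unique {ξ : Set (Tr V A)} {w w' : Word A} (h : HasWord Λ ξ w)
    (h' : HasWord Λ ξ w') : w = w' :=
  word_eq_of_prefix_iff fun β hβ => ((h β hβ).symm.trans (h' β hβ))

theorem relRange_nil (X : Set V) : Λ.relRange X [] = X := by simp [relRange]

theorem rangeL_nil : Λ.rangeL [] = Set.univ := by simp [rangeL, relRange]

theorem rangeL_append_subset (x y : List A) : Λ.rangeL (x ++ y) ⊆ Λ.rangeL y := by
  rcases eq_or_ne y [] with rfl | hy
  · rw [rangeL_nil]; exact Set.subset_univ _
  rcases eq_or_ne x [] with rfl | hx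
  · simp
  have hxy : x ++ y ≠ [] := by simp [hx]
  intro v hv
  rw [rangeL, relRange, if_neg hxy] at hv
  obtain ⟨l, hl, hch, hmap, -, hlast⟩ := hv
  have hlen : l.length = x.length + y.length := by
    have := congrArg List.length hmap
    simpa using this
  have hy1 : 0 < y.length := List.length_pos_iff.mpr hy
  have hd : (l.drop x.length) ≠ [] := by
    intro hcon
    have hll := congrArg List.length hcon
    rw [List.length_drop, hlen, List.length_nil] at hll
    omega
  rw [rangeL, relRange, if_neg hy]
  refine ⟨l.drop x.length, hd, hch.suffix (List.drop_suffix _ _), ?_, Set.mem_univ _, ?_⟩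
  · rw [List.map_drop, hmap]
    simpa using List.drop_left x y
  · rw [List.getLast_eq_getElem, List.getElem_drop, ← hlast, List.getLast_eq_getElem]
    simp only [List.length_drop, hlen]
    have hidx : x.length + (x.length + y.length - x.length - 1) = x.length + y.length - 1 := by
      omega
    simp only [hidx]

theorem mem_filter_elim {ξ : Set (Tr V A)} (hξ : Λ.IsFilterES ξ) {t : Tr V A} (ht : t ∈ ξ) :
    ∃ β B, t = Tr.mk β B β ∧ β ∈ Λ.LStar ∧ B ∈ Λ.Aset β ∧ B.Nonempty := by
  obtain ⟨hE, hz⟩ := hξ.2.1 t ht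
  rcases hE with h0 | ⟨β, B, rfl, h1, h2, h3⟩
  · exact absurd h0 hz
  · exact ⟨β, B, rfl, h1, h2, h3⟩

theorem tmul_right {α X β γ Y δ} (h : β <+: γ)
    (hne : (Λ.relRange X (γ.drop β.length) ∩ Y).Nonempty) :
    Λ.tmul (Tr.mk α X β) (Tr.mk γ Y δ) =
      Tr.mk (α ++ γ.drop β.length) (Λ.relRange X (γ.drop β.length) ∩ Y) δ := by
  rw [tmul, if_pos ⟨h, hne⟩]

theorem tmul_left {α X β γ Y δ} (h : γ <+: β)
    (hne : (X ∩ Λ.relRange Y (β.drop γ.length)).Nonempty) :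
    Λ.tmul (Tr.mk α X β) (Tr.mk γ Y δ) =
      Tr.mk α (X ∩ Λ.relRange Y (β.drop γ.length)) (δ ++ β.drop γ.length) := by
  by_cases hbg : β <+: γ
  · have hβγ : β = γ := hbg.eq_of_length (hbg.length_le.antisymm h.length_le)
    subst hβγ
    simp only [List.drop_length, relRange_nil] at hne ⊢
    rw [tmul, if_pos ⟨List.prefix_refl β, by simpa [relRange_nil] using hne⟩]
    simp [relRange_nil]
  · rw [tmul, if_neg (fun hc => hbg hc.1), if_pos ⟨h, hne⟩]

theorem tmul_ne_zero_cases {α X β γ Y δ}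
    (h : Λ.tmul (Tr.mk α X β) (Tr.mk γ Y δ) ≠ Tr.zero) :
    (β <+: γ ∧ (Λ.relRange X (γ.drop β.length) ∩ Y).Nonempty) ∨
      (γ <+: β ∧ (X ∩ Λ.relRange Y (β.drop γ.length)).Nonempty) := by
  rw [tmul] at h
  by_cases h1 : β <+: γ ∧ (Λ.relRange X (γ.drop β.length) ∩ Y).Nonempty
  · exact Or.inl h1
  rw [if_neg h1] at h
  by_cases h2 : γ <+: β ∧ (X ∩ Λ.relRange Y (β.drop γ.length)).Nonempty
  · exact Or.inr h2
  rw [if_neg h2] at h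
  exact absurd rfl h

theorem Hcut_nil (ξ : Set (Tr V A)) : Λ.Hcut [] ξ = ξ := by simp [Hcut]

theorem mem_Hcut {α : List A} (hα : α ≠ []) {ξ : Set (Tr V A)} {t : Tr V A} :
    t ∈ Λ.Hcut α ξ ↔ ∃ δ B, t = Tr.mk δ B δ ∧ B ∈ Λ.Aset δ ∧
      ∃ D, Tr.mk (α ++ δ) D (α ++ δ) ∈ ξ ∧ D ⊆ B := by
  rw [Hcut, if_neg hα]
  rfl

theorem Hcut_append {ξ : Set (Tr V A)} (hξ : Λ.IsFilterES ξ) (x y : List A) :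
    Λ.Hcut (x ++ y) ξ = Λ.Hcut y (Λ.Hcut x ξ) := by
  rcases eq_or_ne x [] with rfl | hx
  · rw [List.nil_append, Hcut_nil]
  rcases eq_or_ne y [] with rfl | hy
  · rw [List.append_nil, Hcut_nil]
  have hxy : x ++ y ≠ [] := by simp [hx]
  ext t
  rw [mem_Hcut hxy, mem_Hcut hy]
  constructor
  · rintro ⟨δ, B, rfl, hB, D, hD, hDB⟩
    refine ⟨δ, B, rfl, hB, D, ?_, hDB⟩
    rw [mem_Hcut hx]
    obtain ⟨β₀, B₀, heq, -, hA, -⟩ := mem_filter_elim hξ hD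
    injection heq with h1 h2 h3
    subst h1; subst h2
    refine ⟨y ++ δ, D, rfl, ⟨hA.1, hA.2.trans ?_⟩, D, ?_, subset_rfl⟩
    · rw [show x ++ y ++ δ = x ++ (y ++ δ) from List.append_assoc x y δ]
      exact Λ.rangeL_append_subset x (y ++ δ)
    · rw [show x ++ (y ++ δ) = x ++ y ++ δ from (List.append_assoc x y δ).symm]
      exact hD
  · rintro ⟨δ, B, rfl, hB, D', hD', hsub⟩
    rw [mem_Hcut hx] at hD'
    obtain ⟨δ₂, B₂, heq, hB₂, D, hD, hDsub⟩ := hD'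
    injection heq with h1 h2 h3
    subst h1; subst h2
    refine ⟨δ, B, rfl, hB, D, ?_, hDsub.trans hsub⟩
    rw [show x ++ y ++ δ = x ++ (y ++ δ) from List.append_assoc x y δ]
    exact hD

theorem filter_up {ξ : Set (Tr V A)} (hξ : Λ.IsFilterES ξ) {p q : Tr V A} (hp : p ∈ ξ)
    (hq : q ∈ Λ.ESet) (h : Λ.tmul p q = p) : q ∈ ξ := hξ.2.2.2 p hp q hq h

theorem mk_mem_filter_elim {ξ : Set (Tr V A)} (hξ : Λ.IsFilterES ξ) {β : List A}
    {B : Set V} (ht : Tr.mk β B β ∈ ξ) : β ∈ Λ.LStar ∧ B ∈ Λ.Aset β ∧ B.Nonempty := by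
  obtain ⟨β₀, B₀, heq, h1, h2, h3⟩ := mem_filter_elim hξ ht
  injection heq with a b c
  subst a; subst b
  exact ⟨h1, h2, h3⟩

theorem Hcut_inj_subset {ξ ξ' : Set (Tr V A)} (hξ : Λ.IsFilterES ξ) (hξ' : Λ.IsFilterES ξ')
    {α : List A} {γ : Word A} (hα : α ≠ []) (wξ : HasWord Λ ξ (wappend α γ))
    (wξ' : HasWord Λ ξ' (wappend α γ)) (h : Λ.Hcut α ξ = Λ.Hcut α ξ') : ξ ⊆ ξ' := by
  intro t ht
  obtain ⟨β, B, rfl, hβL, hBA, hBne⟩ := mem_filter_elim hξ ht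
  have hEt : Tr.mk β B β ∈ Λ.ESet := (hξ.2.1 _ ht).1
  obtain ⟨D, hD⟩ := hasWord_mem wξ (wprefix_wappend α γ) hα
  have hcomp : β <+: α ∨ α <+: β := by
    rcases eq_or_ne β [] with rfl | hβne
    · exact Or.inl List.nil_prefix
    have hβw : WPrefix β (wappend α γ) := (wξ β hβne).mp ⟨B, ht⟩
    have hαw : WPrefix α (wappend α γ) := wprefix_wappend α γ
    rcases le_or_gt β.length α.length with hle | hlt
    · exact Or.inl (wprefix_prefix hβw hαw hle)
    · exact Or.inr (wprefix_prefix hαw hβw hlt.le)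
  rcases hcomp with hba | hab
  · -- β <+: α
    have hβρ : β ++ α.drop β.length = α := by
      obtain ⟨tl, htl⟩ := hba
      rw [← htl, List.drop_left]
    have hprod : Λ.tmul (Tr.mk β B β) (Tr.mk α D α) ∈ ξ := hξ.2.2.1 _ ht _ hD
    have hnz : Λ.tmul (Tr.mk β B β) (Tr.mk α D α) ≠ Tr.zero := (hξ.2.1 _ hprod).2
    have hne1 : (Λ.relRange B (α.drop β.length) ∩ D).Nonempty := by
      rcases Λ.tmul_ne_zero_cases hnz with ⟨-, h1⟩ | ⟨hab2, h2⟩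
      · exact h1
      · have hβα : β = α := hba.eq_of_length (le_antisymm hba.length_le hab2.length_le)
        subst hβα
        rw [List.drop_length, relRange_nil] at h2 ⊢
        exact h2
    have heval : Λ.tmul (Tr.mk β B β) (Tr.mk α D α)
        = Tr.mk α (Λ.relRange B (α.drop β.length) ∩ D) α := by
      rw [Λ.tmul_right hba hne1, hβρ]
    rw [heval] at hprod
    obtain ⟨β₀, B₀, heq, -, hEA, hEne⟩ := mem_filter_elim hξ hprod
    injection heq with h1 h2 h3
    subst h1; rw [← h2] at hEA hEne
    have hmem : Tr.mk [] (Λ.relRange B (α.drop β.length) ∩ D) []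
        ∈ Λ.Hcut α ξ := by
      rw [mem_Hcut hα]
      refine ⟨[], _, rfl, ⟨hEA.1, by rw [rangeL_nil]; exact Set.subset_univ _⟩, _, ?_,
        subset_rfl⟩
      rw [List.append_nil]
      exact hprod
    rw [h, mem_Hcut hα] at hmem
    obtain ⟨δ₂, B₂, heq2, -, D₂, hD₂, hD₂E⟩ := hmem
    injection heq2 with h4 h5 h6
    subst h4
    rw [← h5] at hD₂E
    rw [List.append_nil] at hD₂
    have hD₂ne : D₂.Nonempty := (mk_mem_filter_elim hξ' hD₂).2.2
    have hD₂sub : D₂ ⊆ Λ.relRange B (α.drop β.length) := fun v hv => (hD₂E hv).1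
    refine filter_up hξ' hD₂ hEt ?_
    rw [Λ.tmul_left hba (by rw [Set.inter_eq_left.mpr hD₂sub]; exact hD₂ne),
      Set.inter_eq_left.mpr hD₂sub, hβρ]
  · -- α <+: β
    have hβδ : α ++ β.drop α.length = β := by
      obtain ⟨tl, htl⟩ := hab
      rw [← htl, List.drop_left]
    have hBδ : B ∈ Λ.Aset (β.drop α.length) := by
      have hss := Λ.rangeL_append_subset α (β.drop α.length)
      rw [hβδ] at hss
      exact ⟨hBA.1, hBA.2.trans hss⟩
    have hmem : Tr.mk (β.drop α.length) B (β.drop α.length) ∈ Λ.Hcut α ξ := by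
      rw [mem_Hcut hα]
      refine ⟨_, B, rfl, hBδ, B, ?_, subset_rfl⟩
      rw [hβδ]
      exact ht
    rw [h, mem_Hcut hα] at hmem
    obtain ⟨δ₂, B₂, heq2, -, D₂, hD₂, hD₂B⟩ := hmem
    injection heq2 with h4 h5 h6
    subst h4
    rw [← h5] at hD₂B
    rw [hβδ] at hD₂
    have hD₂ne : D₂.Nonempty := (mk_mem_filter_elim hξ' hD₂).2.2
    refine filter_up hξ' hD₂ hEt ?_
    rw [Λ.tmul_left (List.prefix_refl β)
      (by rw [List.drop_length, relRange_nil, Set.inter_eq_left.mpr hD₂B]; exact hD₂ne),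
      List.drop_length, relRange_nil, Set.inter_eq_left.mpr hD₂B, List.append_nil]

theorem Hcut_injective {ξ ξ' : Set (Tr V A)} (hξ : Λ.IsFilterES ξ) (hξ' : Λ.IsFilterES ξ')
    {α : List A} {γ : Word A} (wξ : HasWord Λ ξ (wappend α γ))
    (wξ' : HasWord Λ ξ' (wappend α γ)) (h : Λ.Hcut α ξ = Λ.Hcut α ξ') : ξ = ξ' := by
  rcases eq_or_ne α [] with rfl | hα
  · rw [Hcut_nil, Hcut_nil] at h
    exact h
  · exact Set.Subset.antisymm (Hcut_inj_subset hξ hξ' hα wξ wξ' h)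
      (Hcut_inj_subset hξ' hξ hα wξ' wξ h.symm)

/-- The basic sets of the `Z`-topology on `Γ`, as subsets of the type `GammaT`. -/
noncomputable def zset (Λ : LblSp V Ed A) (μ ν : List A) (e : Tr V A) (es : List (Tr V A)) :
    Set Λ.GammaT := {p | Λ.rawOf p ∈ Λ.ZrawGen μ ν e es}

theorem mem_zset {μ ν : List A} {e : Tr V A} {es : List (Tr V A)} {p : Λ.GammaT} :
    p ∈ Λ.zset μ ν e es ↔
      Λ.InGamma p.fst.carrier p.mid p.lst.carrier ∧
      p.mid = (μ.length : ℤ) - (ν.length : ℤ) ∧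
      e ∈ p.lst.carrier ∧ (∀ f ∈ es, f ∉ p.lst.carrier) ∧
      ∃ γ : Word A, HasWord Λ p.fst.carrier (wappend μ γ) ∧
        HasWord Λ p.lst.carrier (wappend ν γ) ∧
        Λ.Hcut μ p.fst.carrier = Λ.Hcut ν p.lst.carrier := Iff.rfl

/-- Construction of the set `X` making `(a, X, b)` an element of `S`. -/
theorem exists_SSet {ξ η : Set (Tr V A)} {a b : List A} {γ : Word A}
    (ha : a ∈ Λ.LStar) (hb : b ∈ Λ.LStar)
    (hξF : Λ.IsFilterES ξ) (hηF : Λ.IsFilterES η)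
    (wξ : HasWord Λ ξ (wappend a γ)) (wη : HasWord Λ η (wappend b γ))
    (hH : Λ.Hcut a ξ = Λ.Hcut b η) : ∃ X : Set V, Tr.mk a X b ∈ Λ.SSet := by
  have key : ∃ X : Set V, X ∈ Λ.Aset a ∧ X ∈ Λ.Aset b ∧ X.Nonempty := by
    have hAnil : ∀ X : Set V, X ∈ Λ.𝒜 → X ∈ Λ.Aset ([] : List A) := fun X hX =>
      ⟨hX, by rw [rangeL_nil]; exact Set.subset_univ X⟩
    rcases eq_or_ne a [] with rfl | hA
    · rcases eq_or_ne b [] with rfl | hB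
      · obtain ⟨t, ht⟩ := hηF.1
        obtain ⟨δ, B, rfl, -, hBA, hBne⟩ := mem_filter_elim hηF ht
        exact ⟨B, hAnil B hBA.1, hAnil B hBA.1, hBne⟩
      · obtain ⟨D, hD⟩ := hasWord_mem wη (wprefix_wappend b γ) hB
        obtain ⟨-, hDA, hDne⟩ := mk_mem_filter_elim hηF hD
        exact ⟨D, hAnil D hDA.1, hDA, hDne⟩
    · rcases eq_or_ne b [] with rfl | hB
      · obtain ⟨D, hD⟩ := hasWord_mem wξ (wprefix_wappend a γ) hA
        obtain ⟨-, hDA, hDne⟩ := mk_mem_filter_elim hξF hD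
        exact ⟨D, hDA, hAnil D hDA.1, hDne⟩
      · obtain ⟨D, hD⟩ := hasWord_mem wξ (wprefix_wappend a γ) hA
        obtain ⟨-, hDA, hDne⟩ := mk_mem_filter_elim hξF hD
        have hmem : Tr.mk [] D [] ∈ Λ.Hcut a ξ := by
          rw [mem_Hcut hA]
          refine ⟨[], D, rfl, hAnil D hDA.1, D, ?_, subset_rfl⟩
          rw [List.append_nil]; exact hD
        rw [hH, mem_Hcut hB] at hmem
        obtain ⟨δ₂, B₂, heq, -, D₂, hD₂, hsub⟩ := hmem
        injection heq with h1 h2 h3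
        subst h1
        rw [← h2] at hsub
        rw [List.append_nil] at hD₂
        obtain ⟨-, hD₂b, hD₂ne⟩ := mk_mem_filter_elim hηF hD₂
        exact ⟨D₂, ⟨hD₂b.1, hsub.trans hDA.2⟩, hD₂b, hD₂ne⟩
  obtain ⟨X, hXa, hXb, hXne⟩ := key
  exact ⟨X, Or.inr ⟨a, X, b, rfl, ha, hb, hXa, hXb, hXne⟩⟩

/-- An element of a tight filter is in `E(S)`. -/
theorem mem_ESet_of_lst {p : Λ.GammaT} {e : Tr V A} (he : e ∈ p.lst.carrier) :
    e ∈ Λ.ESet := (p.lst.tight.1.2.1 e he).1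

theorem TightT.ext' {x y : Λ.TightT} (h : x.carrier = y.carrier) : x = y := by
  cases x; cases y
  simp only at h
  subst h
  rfl

theorem GammaT.ext' {p q : Λ.GammaT} (h1 : p.fst.carrier = q.fst.carrier)
    (h2 : p.mid = q.mid) (h3 : p.lst.carrier = q.lst.carrier) : p = q := by
  have e1 : p.fst = q.fst := TightT.ext' h1
  have e3 : p.lst = q.lst := TightT.ext' h3
  cases p; cases q
  simp only at e1 e3 h2
  subst e1; subst e3; subst h2
  rfl

/-- Given `p ∈ Γ` whose last coordinate contains `e` and avoids `es`, there is a basic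
set of the prescribed form containing `p`. -/
theorem zset_good (p : Λ.GammaT) {a b : List A} {γ : Word A}
    (ha : a ∈ Λ.LStar) (hb : b ∈ Λ.LStar)
    (wξ : HasWord Λ p.fst.carrier (wappend a γ)) (wη : HasWord Λ p.lst.carrier (wappend b γ))
    (hm : p.mid = (a.length : ℤ) - (b.length : ℤ))
    (hH : Λ.Hcut a p.fst.carrier = Λ.Hcut b p.lst.carrier)
    {e : Tr V A} {es : List (Tr V A)} (he : e ∈ p.lst.carrier)
    (hes : ∀ f ∈ es, f ∉ p.lst.carrier) (hesE : ∀ f ∈ es, f ∈ Λ.ESet) :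
    Λ.zset a b e es ∈ Λ.ZBasisT ∧ p ∈ Λ.zset a b e es := by
  obtain ⟨X, hX⟩ := exists_SSet ha hb p.fst.tight.1 p.lst.tight.1 wξ wη hH
  constructor
  · exact ⟨a, X, b, e, es, hX, mem_ESet_of_lst he, hesE, rfl⟩
  · exact mem_zset.mpr ⟨p.mem, hm, he, hes, γ, wξ, wη, hH⟩

theorem witness (p : Λ.GammaT) : ∃ (a b : List A) (γ : Word A), a ∈ Λ.LStar ∧ b ∈ Λ.LStar ∧
    HasWord Λ p.fst.carrier (wappend a γ) ∧ HasWord Λ p.lst.carrier (wappend b γ) ∧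
    p.mid = (a.length : ℤ) - (b.length : ℤ) ∧
    Λ.Hcut a p.fst.carrier = Λ.Hcut b p.lst.carrier := by
  obtain ⟨a, b, γ, ha, hb, hγ, hT1, hT2, hm, hH⟩ := p.mem
  exact ⟨a, b, γ, ha, hb, hT1.2, hT2.2, hm, hH⟩

theorem sep_mid {p q : Λ.GammaT} (h : p.mid ≠ q.mid) :
    ∃ u v : Set Λ.GammaT, u ∈ Λ.ZBasisT ∧ v ∈ Λ.ZBasisT ∧ p ∈ u ∧ q ∈ v ∧ Disjoint u v := by
  obtain ⟨a, b, γ, ha, hb, wξ, wη, hm, hH⟩ := witness p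
  obtain ⟨a', b', γ', ha', hb', wξ', wη', hm', hH'⟩ := witness q
  obtain ⟨e₀, he₀⟩ := p.lst.tight.1.1
  obtain ⟨e₁, he₁⟩ := q.lst.tight.1.1
  have hp := zset_good p ha hb wξ wη hm hH he₀ (es := [])
    (fun f hf => absurd hf List.not_mem_nil) (fun f hf => absurd hf List.not_mem_nil)
  have hq := zset_good q ha' hb' wξ' wη' hm' hH' he₁ (es := [])
    (fun f hf => absurd hf List.not_mem_nil) (fun f hf => absurd hf List.not_mem_nil)
  refine ⟨_, _, hp.1, hq.1, hp.2, hq.2, Set.disjoint_left.mpr ?_⟩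
  intro r hr hr'
  have h1 := (mem_zset.mp hr).2.1
  have h2 := (mem_zset.mp hr').2.1
  exact h (by rw [hm, hm', ← h1, ← h2])

theorem sep_lst {p q : Λ.GammaT} {e : Tr V A} (he : e ∈ p.lst.carrier)
    (hne : e ∉ q.lst.carrier) :
    ∃ u v : Set Λ.GammaT, u ∈ Λ.ZBasisT ∧ v ∈ Λ.ZBasisT ∧ p ∈ u ∧ q ∈ v ∧ Disjoint u v := by
  obtain ⟨a, b, γ, ha, hb, wξ, wη, hm, hH⟩ := witness p
  obtain ⟨a', b', γ', ha', hb', wξ', wη', hm', hH'⟩ := witness q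
  obtain ⟨e₁, he₁⟩ := q.lst.tight.1.1
  have hp := zset_good p ha hb wξ wη hm hH he (es := [])
    (fun f hf => absurd hf List.not_mem_nil) (fun f hf => absurd hf List.not_mem_nil)
  have hq := zset_good q ha' hb' wξ' wη' hm' hH' he₁ (es := [e])
    (fun f hf => by rw [List.mem_singleton] at hf; subst hf; exact hne)
    (fun f hf => by rw [List.mem_singleton] at hf; subst hf; exact mem_ESet_of_lst he)
  refine ⟨_, _, hp.1, hq.1, hp.2, hq.2, Set.disjoint_left.mpr ?_⟩
  intro r hr hr'
  have h1 := (mem_zset.mp hr).2.2.1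
  have h2 := (mem_zset.mp hr').2.2.2.1 e (List.mem_singleton_self e)
  exact h2 h1

theorem sep_fst_aux {p q : Λ.GammaT} {a b a' b' : List A} {γ γ' : Word A}
    (ha : a ∈ Λ.LStar) (hb : b ∈ Λ.LStar) (ha' : a' ∈ Λ.LStar) (hb' : b' ∈ Λ.LStar)
    (wξ : HasWord Λ p.fst.carrier (wappend a γ))
    (wη : HasWord Λ p.lst.carrier (wappend b γ))
    (hm : p.mid = (a.length : ℤ) - (b.length : ℤ))
    (hH : Λ.Hcut a p.fst.carrier = Λ.Hcut b p.lst.carrier)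
    (wξ' : HasWord Λ q.fst.carrier (wappend a' γ'))
    (wη' : HasWord Λ q.lst.carrier (wappend b' γ'))
    (hm' : q.mid = (a'.length : ℤ) - (b'.length : ℤ))
    (hH' : Λ.Hcut a' q.fst.carrier = Λ.Hcut b' q.lst.carrier)
    (hmid : p.mid = q.mid) (hlst : p.lst.carrier = q.lst.carrier)
    (hfst : p.fst.carrier ≠ q.fst.carrier) (hlen : b.length ≤ b'.length) :
    ∃ u v : Set Λ.GammaT, u ∈ Λ.ZBasisT ∧ v ∈ Λ.ZBasisT ∧ p ∈ u ∧ q ∈ v ∧ Disjoint u v := by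
  have wη'' : HasWord Λ p.lst.carrier (wappend b' γ') := by rw [hlst]; exact wη'
  have hw : wappend b γ = wappend b' γ' := hasWord_unique wη wη''
  have hbpre : b <+: b' := by
    refine wprefix_prefix (w := wappend b' γ') ?_ (wprefix_wappend b' γ') hlen
    rw [← hw]
    exact wprefix_wappend b γ
  have hbτ : b ++ b'.drop b.length = b' := by
    obtain ⟨tl, htl⟩ := hbpre
    rw [← htl, List.drop_left]
  have hγeq : γ = wappend (b'.drop b.length) γ' := by
    apply wappend_left_cancel (x := b)
    rw [hw]
    conv_lhs => rw [← hbτ]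
    exact wappend_assoc b (b'.drop b.length) γ'
  have hkey : a' ≠ a ++ b'.drop b.length := by
    intro hcon
    apply hfst
    refine Hcut_injective (γ := γ') p.fst.tight.1 q.fst.tight.1 ?_ wξ' ?_
    · rw [hcon, wappend_assoc, ← hγeq]
      exact wξ
    · rw [hcon, Λ.Hcut_append p.fst.tight.1 a _, hH, ← Λ.Hcut_append p.lst.tight.1 b _,
        hbτ, ← hcon, hH', hlst]
  obtain ⟨e₀, he₀⟩ := p.lst.tight.1.1
  obtain ⟨e₁, he₁⟩ := q.lst.tight.1.1
  have hp := zset_good p ha hb wξ wη hm hH he₀ (es := [])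
    (fun f hf => absurd hf List.not_mem_nil) (fun f hf => absurd hf List.not_mem_nil)
  have hq := zset_good q ha' hb' wξ' wη' hm' hH' he₁ (es := [])
    (fun f hf => absurd hf List.not_mem_nil) (fun f hf => absurd hf List.not_mem_nil)
  refine ⟨_, _, hp.1, hq.1, hp.2, hq.2, Set.disjoint_left.mpr ?_⟩
  intro r hr hr'
  obtain ⟨-, hm1, -, -, γ₁, rw1, rl1, -⟩ := mem_zset.mp hr
  obtain ⟨-, hm2, -, -, γ₂, rw2, rl2, -⟩ := mem_zset.mp hr'
  have hww : wappend b γ₁ = wappend b' γ₂ := hasWord_unique rl1 rl2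
  have hγ12 : γ₁ = wappend (b'.drop b.length) γ₂ := by
    apply wappend_left_cancel (x := b)
    rw [hww]
    conv_lhs => rw [← hbτ]
    exact wappend_assoc b (b'.drop b.length) γ₂
  have hwwf : wappend a γ₁ = wappend a' γ₂ := hasWord_unique rw1 rw2
  have hfinal : a ++ b'.drop b.length = a' := by
    have hz : (a.length : ℤ) - (b.length : ℤ) = (a'.length : ℤ) - (b'.length : ℤ) := by
      rw [← hm1, hm2]
    have hlb : b.length + (b'.drop b.length).length = b'.length := by
      rw [List.length_drop]; omega
    refine wappend_right_cancel (γ := γ₂) ?_ ?_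
    · rw [List.length_append]; omega
    · rw [wappend_assoc, ← hγ12]; exact hwwf
  exact hkey hfinal.symm

theorem sep_fst {p q : Λ.GammaT} (hmid : p.mid = q.mid)
    (hlst : p.lst.carrier = q.lst.carrier) (hfst : p.fst.carrier ≠ q.fst.carrier) :
    ∃ u v : Set Λ.GammaT, u ∈ Λ.ZBasisT ∧ v ∈ Λ.ZBasisT ∧ p ∈ u ∧ q ∈ v ∧ Disjoint u v := by
  obtain ⟨a, b, γ, ha, hb, wξ, wη, hm, hH⟩ := witness p
  obtain ⟨a', b', γ', ha', hb', wξ', wη', hm', hH'⟩ := witness q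
  rcases le_total b.length b'.length with hle | hle
  · exact sep_fst_aux ha hb ha' hb' wξ wη hm hH wξ' wη' hm' hH' hmid hlst hfst hle
  · obtain ⟨u, v, h1, h2, h3, h4, h5⟩ := sep_fst_aux ha' hb' ha hb wξ' wη' hm' hH' wξ wη
      hm hH hmid.symm hlst.symm (Ne.symm hfst) hle
    exact ⟨v, u, h2, h1, h4, h3, h5.symm⟩

theorem sep_main {p q : Λ.GammaT} (hpq : p ≠ q) :
    ∃ u v : Set Λ.GammaT, u ∈ Λ.ZBasisT ∧ v ∈ Λ.ZBasisT ∧ p ∈ u ∧ q ∈ v ∧ Disjoint u v := by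
  by_cases h1 : p.mid = q.mid
  · by_cases h2 : p.lst.carrier = q.lst.carrier
    · exact sep_fst h1 h2 (fun hc => hpq (GammaT.ext' hc h1 h2))
    · have : ∃ e, (e ∈ p.lst.carrier ∧ e ∉ q.lst.carrier) ∨
          (e ∈ q.lst.carrier ∧ e ∉ p.lst.carrier) := by
        by_contra hc
        push_neg at hc
        exact h2 (Set.ext fun t => ⟨fun ht => (hc t).1 ht, fun ht => (hc t).2 ht⟩)
      obtain ⟨e, ⟨he1, he2⟩ | ⟨he1, he2⟩⟩ := this
      · exact sep_lst he1 he2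
      · obtain ⟨u, v, hh1, hh2, hh3, hh4, hh5⟩ := sep_lst he1 he2
        exact ⟨v, u, hh2, hh1, hh4, hh3, hh5.symm⟩
  · exact sep_mid h1

end LblSp

namespace LblSp

variable {V : Type u} {Ed : Type v} {A : Type w} (Λ : LblSp V Ed A)

/-- The groupoid `Γ`, with the topology whose basis is the collection
of the sets `Z_{s,e:e₁,…,eₙ}` (`s ∈ S`, `e, e₁, …, eₙ ∈ E(S)`), is Hausdorff. -/
theorem statement_4 (hΛ : Λ.IsNormal) :
    @T2Space Λ.GammaT (TopologicalSpace.generateFrom Λ.ZBasisT) := by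
  letI : TopologicalSpace Λ.GammaT := TopologicalSpace.generateFrom Λ.ZBasisT
  refine ⟨fun p q hpq => ?_⟩
  obtain ⟨u, v, hu, hv, hpu, hqv, hd⟩ := sep_main hpq
  exact ⟨u, v, TopologicalSpace.GenerateOpen.basic u hu,
    TopologicalSpace.GenerateOpen.basic v hv, hpu, hqv, hd⟩

end LblSp
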